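/- The map Δ₂ is coassociative, (Δ₂ ⊗ id) ∘ Δ₂ = (id ⊗ Δ₂) ∘ Δ₂, and ε is a counit for it, (ε ⊗ id) ∘ Δ₂ = id = (id ⊗ ε) ∘ Δ₂; hence (H^red_pl, concatenation product, unit 1, Δ₂, ε) is a bialgebra. -/

import Mathlib

inductive R : Type
  | leaf : R
  | node : R → R → List R → R

mutual
/-- The list of all admissible cuts of a reduced planar tree, each cut `c` recorded as
the pair `(P^c(t), R^c(t))` of its pruning (an ordered forest, the subtrees standing
above the cut edges listed from left to right) and its trunk (the tree obtained by
replacing each such subtree by a single leaf).  The empty cut contributes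
`([], t)` and the cut at the root edge contributes `([t], |)`. -/
def allCuts : R → List (List R × R)
  | .leaf => [([], R.leaf)]
  | .node t1 t2 rest =>
      ([R.node t1 t2 rest], R.leaf) ::
      (allCuts t1).flatMap (fun p1 =>
        (allCuts t2).flatMap (fun p2 =>
          (cutsL rest).map (fun q =>
            (p1.1 ++ p2.1 ++ q.1, R.node p1.2 p2.2 q.2))))

/-- Admissible cuts of a forest: a choice of admissible cut in each tree of the list. -/
def cutsL : List R → List (List R × List R)
  | [] => [([], [])]
  | u :: us =>
      (allCuts u).flatMap (fun p =>
        (cutsL us).map (fun q => (p.1 ++ q.1, p.2 :: q.2)))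
end

/-- Non-leaf reduced planar trees, the generators of `H^red_pl`. -/
def Rp : Type := {t : R // t ≠ R.leaf}

/-- Casting a reduced planar tree to an optional generator (`|` is read as nothing). -/
def toRp? : R → Option Rp
  | R.leaf => none
  | R.node t1 t2 rest => some ⟨R.node t1 t2 rest, fun h => R.noConfusion h⟩

/-- A forest (with occurrences of the leaf `|` read as the empty word `1`), as a word
in the non-leaf reduced planar trees. -/
def listToF (l : List R) : FreeMonoid Rp := FreeMonoid.ofList (l.filterMap toRp?)

-- basic cut lemmas
theorem cutsL_nil : cutsL [] = [([], [])] := by rw [cutsL]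

theorem cutsL_cons (u : R) (us : List R) :
    cutsL (u :: us) = (allCuts u).flatMap (fun p =>
        (cutsL us).map (fun q => (p.1 ++ q.1, p.2 :: q.2))) := by rw [cutsL]

theorem cutsL_append (a b : List R) :
    cutsL (a ++ b) = (cutsL a).flatMap (fun r =>
      (cutsL b).map (fun s => (r.1 ++ s.1, r.2 ++ s.2))) := by
  induction a with
  | nil => simp [cutsL_nil]
  | cons u us ih =>
      simp only [List.cons_append, cutsL_cons, ih, List.flatMap_assoc, List.map_flatMap,
        List.flatMap_map, List.map_map]
      apply List.flatMap_congr
      intro p _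
      apply List.flatMap_congr
      intro r _
      simp [Function.comp, List.append_assoc]

theorem cutsL_singleton (t : R) :
    cutsL [t] = (allCuts t).map (fun p => (p.1, [p.2])) := by
  rw [cutsL_cons]
  simp [cutsL_nil]; rw [← List.map_eq_flatMap]

-- appended to part1
def F (l : List R) : List Rp := l.filterMap toRp?

@[simp] theorem F_nil : F [] = [] := rfl
@[simp] theorem F_append (a b : List R) : F (a ++ b) = F a ++ F b :=
  List.filterMap_append
@[simp] theorem F_leaf : F [R.leaf] = [] := rfl
theorem F_cons (u : R) (l : List R) : F (u :: l) = F [u] ++ F l := by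
  cases u <;> rfl

/-- combine a tree-cut-triple multiset with a forest-cut-triple multiset (cons). -/
def cCons (M : Multiset (List Rp × List Rp × R)) (N : Multiset (List Rp × List Rp × List R)) :
    Multiset (List Rp × List Rp × List R) :=
  M.bind fun x => N.map fun y => (x.1 ++ y.1, x.2.1 ++ y.2.1, x.2.2 :: y.2.2)

def cNode (M1 M2 : Multiset (List Rp × List Rp × R))
    (N : Multiset (List Rp × List Rp × List R)) : Multiset (List Rp × List Rp × R) :=
  M1.bind fun x1 => M2.bind fun x2 => N.map fun x3 =>
    (x1.1 ++ x2.1 ++ x3.1, x1.2.1 ++ x2.2.1 ++ x3.2.1, R.node x1.2.2 x2.2.2 x3.2.2)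

def mA (t : R) : Multiset (List Rp × List Rp × R) :=
  (allCuts t : Multiset (List R × R)).bind fun (p : List R × R) =>
    (cutsL p.1 : Multiset (List R × List R)).map fun (q : List R × List R) =>
      (F q.1, F q.2, p.2)

def mB (t : R) : Multiset (List Rp × List Rp × R) :=
  (allCuts t : Multiset (List R × R)).bind fun (p : List R × R) =>
    (allCuts p.2 : Multiset (List R × R)).map fun (r : List R × R) =>
      (F p.1, F r.1, r.2)

def mAL (l : List R) : Multiset (List Rp × List Rp × List R) :=
  (cutsL l : Multiset (List R × List R)).bind fun (p : List R × List R) =>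
    (cutsL p.1 : Multiset (List R × List R)).map fun (q : List R × List R) =>
      (F q.1, F q.2, p.2)

def mBL (l : List R) : Multiset (List Rp × List Rp × List R) :=
  (cutsL l : Multiset (List R × List R)).bind fun (p : List R × List R) =>
    (cutsL p.2 : Multiset (List R × List R)).map fun (r : List R × List R) =>
      (F p.1, F r.1, r.2)

theorem mAL_cons (u : R) (us : List R) : mAL (u :: us) = cCons (mA u) (mAL us) := by
  rw [mAL, cutsL_cons, cCons, mA, mAL]
  rw [← Multiset.coe_bind, Multiset.bind_assoc, Multiset.bind_assoc]
  congr 1; funext p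
  simp only [← Multiset.coe_bind, ← Multiset.map_coe, Multiset.bind_map, Multiset.map_bind,
    Multiset.map_map, cutsL_append, F_append, Function.comp]
  rw [Multiset.bind_bind]

theorem mBL_cons (u : R) (us : List R) : mBL (u :: us) = cCons (mB u) (mBL us) := by
  rw [mBL, cutsL_cons, cCons, mB, mBL]
  rw [← Multiset.coe_bind, Multiset.bind_assoc, Multiset.bind_assoc]
  congr 1; funext p
  simp only [← Multiset.coe_bind, ← Multiset.map_coe, Multiset.bind_map, Multiset.map_bind,
    Multiset.map_map, cutsL_cons, F_append, Function.comp]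
  rw [Multiset.bind_bind]

theorem bind_swizzle {α₁ α₂ α₃ β₁ β₂ γ : Type*} (A₁ : Multiset α₁) (A₂ : Multiset α₂)
    (A₃ : Multiset α₃) (B₁ : α₁ → Multiset β₁) (B₂ : α₂ → Multiset β₂)
    (f : α₁ → α₂ → α₃ → β₁ → β₂ → Multiset γ) :
    (A₁.bind fun a1 => A₂.bind fun a2 => A₃.bind fun a3 =>
      (B₁ a1).bind fun b1 => (B₂ a2).bind fun b2 => f a1 a2 a3 b1 b2)
    = A₁.bind fun a1 => (B₁ a1).bind fun b1 => A₂.bind fun a2 =>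
        (B₂ a2).bind fun b2 => A₃.bind fun a3 => f a1 a2 a3 b1 b2 := by
  refine Multiset.bind_congr fun a1 _ => ?_
  calc A₂.bind (fun a2 => A₃.bind fun a3 => (B₁ a1).bind fun b1 =>
          (B₂ a2).bind fun b2 => f a1 a2 a3 b1 b2)
      = A₂.bind fun a2 => (B₁ a1).bind fun b1 => A₃.bind fun a3 =>
          (B₂ a2).bind fun b2 => f a1 a2 a3 b1 b2 :=
        Multiset.bind_congr fun a2 _ => Multiset.bind_bind _ _
    _ = (B₁ a1).bind fun b1 => A₂.bind fun a2 => A₃.bind fun a3 =>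
          (B₂ a2).bind fun b2 => f a1 a2 a3 b1 b2 := Multiset.bind_bind _ _
    _ = (B₁ a1).bind fun b1 => A₂.bind fun a2 => (B₂ a2).bind fun b2 =>
          A₃.bind fun a3 => f a1 a2 a3 b1 b2 :=
        Multiset.bind_congr fun b1 _ => Multiset.bind_congr fun a2 _ =>
          Multiset.bind_bind _ _

theorem allCuts_node (t1 t2 : R) (rest : List R) :
    allCuts (R.node t1 t2 rest) =
      ([R.node t1 t2 rest], R.leaf) ::
      (allCuts t1).flatMap (fun p1 =>
        (allCuts t2).flatMap (fun p2 =>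
          (cutsL rest).map (fun q =>
            (p1.1 ++ p2.1 ++ q.1, R.node p1.2 p2.2 q.2)))) := by rw [allCuts]

@[simp] theorem F_node (a b : R) (l : List R) :
    F [R.node a b l] = [⟨R.node a b l, fun h => R.noConfusion h⟩] := rfl

def Hd (t : R) : Multiset (List Rp × List Rp × R) :=
  (allCuts t : Multiset (List R × R)).map fun c => (F c.1, F [c.2], R.leaf)

theorem mA_node (t1 t2 : R) (rest : List R) :
    mA (R.node t1 t2 rest) = Hd (R.node t1 t2 rest) + cNode (mA t1) (mA t2) (mAL rest) := by
  rw [mA, allCuts_node]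
  rw [← Multiset.cons_coe, Multiset.cons_bind]
  congr 1
  · -- head chunk = Hd
    rw [cutsL_singleton, Hd, allCuts_node]
    simp only [← Multiset.map_coe, Multiset.map_map, Function.comp]
  · -- tail chunk = cNode
    simp only [← Multiset.coe_bind, ← Multiset.map_coe, Multiset.bind_map, Multiset.map_bind,
      Multiset.map_map, Multiset.bind_assoc, cutsL_append, F_append, Function.comp,
      List.append_assoc, cNode, mA, mAL]
    rw [bind_swizzle]

theorem allCuts_leaf : allCuts R.leaf = [([], R.leaf)] := by rw [allCuts]

theorem mB_node (t1 t2 : R) (rest : List R) :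
    mB (R.node t1 t2 rest) = Hd (R.node t1 t2 rest) + cNode (mB t1) (mB t2) (mBL rest) := by
  rw [mB, allCuts_node, ← Multiset.cons_coe, Multiset.cons_bind]
  rw [Hd, allCuts_node, ← Multiset.cons_coe, Multiset.map_cons, Multiset.cons_add]
  simp only [allCuts_leaf, Multiset.coe_singleton, Multiset.map_singleton, F_leaf, F_nil,
    Multiset.singleton_add]
  congr 1
  -- tail
  simp only [← Multiset.coe_bind, ← Multiset.map_coe, Multiset.bind_map, Multiset.map_bind,
    Multiset.map_map, Multiset.bind_assoc, Function.comp, allCuts_node, ← Multiset.cons_coe,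
    Multiset.map_cons, ← Multiset.singleton_add, Multiset.bind_add, Multiset.bind_singleton,
    Multiset.map_add, Multiset.map_singleton,
    F_append, F_node, F_leaf, F_nil, List.append_assoc]
  rw [cNode, mB, mB, mBL]
  simp only [← Multiset.coe_bind, ← Multiset.map_coe, Multiset.bind_map, Multiset.map_bind,
    Multiset.map_map, Multiset.bind_assoc, Function.comp, F_append, F_node, List.append_assoc]
  congr 1
  · simp only [Function.comp_def, F_append, List.append_assoc]; rfl
  rw [bind_swizzle]

mutual
theorem keyT : ∀ t : R, mA t = mB t
  | R.leaf => by
      simp [mA, mB, allCuts_leaf, cutsL_nil]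
  | R.node t1 t2 rest => by
      rw [mA_node, mB_node, keyT t1, keyT t2, keyL rest]
theorem keyL : ∀ l : List R, mAL l = mBL l
  | [] => by simp [mAL, mBL, cutsL_nil]
  | u :: us => by rw [mAL_cons, mBL_cons, keyT u, keyL us]
end


variable (k : Type*) [Field k]

/-- `H^red_pl`: the free associative unital `k`-algebra with basis the forests (words)
in the non-leaf reduced planar trees, with concatenation product. -/
abbrev H := MonoidAlgebra k (FreeMonoid Rp)

/-- The image in `H^red_pl` of a single reduced planar tree (`|` is read as `1`). -/
noncomputable def emb (t : R) : H k := MonoidAlgebra.single (listToF [t]) (1 : k)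

/-- The coproduct of a generator: `Δ₂(t) = Σ_c P^c(t) ⊗ R^c(t)` over admissible cuts. -/
noncomputable def deltaTree (t : Rp) : TensorProduct k (H k) (H k) :=
  ((allCuts t.1).map (fun c =>
    TensorProduct.tmul k (MonoidAlgebra.single (listToF c.1) (1 : k)) (emb k c.2))).sum

/-- The coproduct `Δ₂ : H^red_pl → H^red_pl ⊗ H^red_pl`, the algebra map extending
`deltaTree` multiplicatively (so `Δ₂(t1⋯tk) = Δ₂(t1)⋯Δ₂(tk)` and `Δ₂(1) = 1 ⊗ 1`). -/
noncomputable def Delta2 : H k →ₐ[k] TensorProduct k (H k) (H k) :=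
  MonoidAlgebra.lift k (TensorProduct k (H k) (H k)) (FreeMonoid Rp)
    (FreeMonoid.lift (deltaTree k))

/-- The counit `ε : H^red_pl → k`: `ε(1) = 1` and `ε = 0` on nonempty forests. -/
noncomputable def eps : H k →ₐ[k] k :=
  MonoidAlgebra.lift k k (FreeMonoid Rp) (FreeMonoid.lift (fun _ : Rp => (0 : k)))

-- ===== the word basis =====
noncomputable def w (l : List R) : H k := MonoidAlgebra.single (listToF l) (1 : k)

theorem listToF_eq (l : List R) : listToF l = FreeMonoid.ofList (F l) := rfl

theorem w_nil : w k [] = 1 := rfl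

theorem w_append (a b : List R) : w k (a ++ b) = w k a * w k b := by
  rw [w, w, w, MonoidAlgebra.single_mul_single, one_mul, listToF_eq, listToF_eq, listToF_eq,
    F_append, FreeMonoid.ofList_append]

theorem emb_eq_w (t : R) : emb k t = w k [t] := rfl

theorem w_cons (u : R) (us : List R) : w k (u :: us) = emb k u * w k us := by
  rw [emb_eq_w, ← w_append, List.singleton_append]

theorem F_map_val (l : List Rp) : F (l.map Subtype.val) = l := by
  induction l with
  | nil => rfl
  | cons x xs ih =>
      obtain ⟨t, ht⟩ := x
      cases t with
      | leaf => exact absurd rfl ht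
      | node a b r =>
          erw [List.map_cons]
          rw [show F (R.node a b r :: xs.map Subtype.val)
              = ⟨R.node a b r, fun h => R.noConfusion h⟩ :: F (xs.map Subtype.val) from rfl, ih]

theorem w_ofRp (l : List Rp) :
    MonoidAlgebra.single (FreeMonoid.ofList l) (1 : k) = w k (l.map Subtype.val) := by
  rw [w, listToF_eq, F_map_val]

theorem Delta2_emb (t : R) :
    Delta2 k (emb k t) =
      ((allCuts t).map (fun c => TensorProduct.tmul k (w k c.1) (emb k c.2))).sum := by
  cases t with
  | leaf =>
      have h1 : emb k R.leaf = 1 := rfl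
      rw [h1, map_one, allCuts_leaf]
      simp only [List.map_cons, List.map_nil, List.sum_cons, List.sum_nil, add_zero]
      rw [show w k [] = 1 from rfl, show emb k R.leaf = 1 from rfl]
      rw [Algebra.TensorProduct.one_def]
  | node a b r =>
      have h1 : emb k (R.node a b r) =
          MonoidAlgebra.single (FreeMonoid.of (⟨R.node a b r, fun h => R.noConfusion h⟩ : Rp))
            (1 : k) := rfl
      rw [h1, Delta2]; erw [MonoidAlgebra.lift_single, one_smul, FreeMonoid.lift_eval_of]
      rfl

theorem sum_flatMap {α β M : Type*} [AddCommMonoid M] (l : List α) (f : α → List β)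
    (g : β → M) : ((l.flatMap f).map g).sum = (l.map fun a => ((f a).map g).sum).sum := by
  induction l with
  | nil => rfl
  | cons a l ih => simp [List.flatMap_cons, ih]

theorem sum_mul_sum_list {α β A : Type*} [NonUnitalNonAssocSemiring A] (l : List α)
    (m : List β) (f : α → A) (g : β → A) :
    (l.map f).sum * (m.map g).sum = (l.flatMap fun a => m.map fun b => f a * g b).sum := by
  induction l with
  | nil => simp
  | cons a l ih =>
      simp only [List.map_cons, List.sum_cons, add_mul, ih, List.flatMap_cons, List.map_map,
        List.sum_append]
      rw [← List.sum_map_mul_left]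

theorem sum_flatMap' {α M : Type*} [AddCommMonoid M] (l : List α) (f : α → List M) :
    (l.flatMap f).sum = (l.map fun a => (f a).sum).sum := by
  induction l with
  | nil => rfl
  | cons a l ih => simp [List.flatMap_cons, ih]

theorem Delta2_w (l : List R) :
    Delta2 k (w k l) =
      ((cutsL l).map (fun p => TensorProduct.tmul k (w k p.1) (w k p.2))).sum := by
  induction l with
  | nil =>
      rw [w_nil, map_one, cutsL_nil]
      simp only [List.map_cons, List.map_nil, List.sum_cons, List.sum_nil, add_zero]
      rw [w_nil, Algebra.TensorProduct.one_def]
  | cons u us ih =>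
      rw [w_cons, map_mul, Delta2_emb, ih, cutsL_cons, sum_mul_sum_list, sum_flatMap',
        sum_flatMap]
      congr 1
      refine List.map_congr_left fun p _ => ?_
      rw [List.map_map]
      refine congrArg List.sum (List.map_congr_left fun q _ => ?_)
      show w k p.1 ⊗ₜ[k] emb k p.2 * w k q.1 ⊗ₜ[k] w k q.2
        = w k (p.1 ++ q.1) ⊗ₜ[k] w k (p.2 :: q.2)
      rw [Algebra.TensorProduct.tmul_mul_tmul, w_append, w_cons]

theorem msum_helper {α β M : Type*} [AddCommMonoid M] (L : List α) (f : α → List β)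
    (g : α → β → M) :
    ((Multiset.bind (↑L) fun a => Multiset.map (g a) ↑(f a)).sum)
      = (L.map fun a => ((f a).map (g a)).sum).sum := by
  rw [Multiset.sum_bind, Multiset.map_coe]
  rw [show (List.map (fun a => (Multiset.map (g a) ↑(f a)).sum) L)
      = L.map fun a => ((f a).map (g a)).sum from ?_, Multiset.sum_coe]
  refine List.map_congr_left fun a _ => ?_
  rw [Multiset.map_coe, Multiset.sum_coe]

noncomputable def G3 : List Rp × List Rp × List R →
    TensorProduct k (H k) (TensorProduct k (H k) (H k)) :=
  fun x => TensorProduct.tmul k (MonoidAlgebra.single (FreeMonoid.ofList x.1) (1 : k))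
    (TensorProduct.tmul k (MonoidAlgebra.single (FreeMonoid.ofList x.2.1) (1 : k)) (w k x.2.2))

theorem key_sums (l : List R) :
    ((cutsL l).map fun p => ((cutsL p.1).map fun q => G3 k (F q.1, F q.2, p.2)).sum).sum
      = ((cutsL l).map fun p => ((cutsL p.2).map fun r => G3 k (F p.1, F r.1, r.2)).sum).sum := by
  have hA : ((mAL l).map (G3 k)).sum
      = ((cutsL l).map fun p => ((cutsL p.1).map fun q => G3 k (F q.1, F q.2, p.2)).sum).sum := by
    rw [mAL, Multiset.map_bind]
    simp only [Multiset.map_map, Function.comp]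
    exact msum_helper (cutsL l) (fun p => cutsL p.1) (fun p q => G3 k (F q.1, F q.2, p.2))
  have hB : ((mBL l).map (G3 k)).sum
      = ((cutsL l).map fun p => ((cutsL p.2).map fun r => G3 k (F p.1, F r.1, r.2)).sum).sum := by
    rw [mBL, Multiset.map_bind]
    simp only [Multiset.map_map, Function.comp]
    exact msum_helper (cutsL l) (fun p => cutsL p.2) (fun p r => G3 k (F p.1, F r.1, r.2))
  rw [← hA, ← hB, keyL l]

theorem list_sum_tmul {α M N : Type*} [AddCommMonoid M] [AddCommMonoid N] [Module k M]
    [Module k N] (l : List α) (f : α → M) (y : N) :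
    TensorProduct.tmul k ((l.map f).sum) y = (l.map fun a => TensorProduct.tmul k (f a) y).sum := by
  induction l with
  | nil => simp [TensorProduct.zero_tmul]
  | cons a l ih => simp [TensorProduct.add_tmul, ih]

theorem tmul_list_sum {α M N : Type*} [AddCommMonoid M] [AddCommMonoid N] [Module k M]
    [Module k N] (l : List α) (f : α → N) (x : M) :
    TensorProduct.tmul k x ((l.map f).sum) = (l.map fun a => TensorProduct.tmul k x (f a)).sum := by
  induction l with
  | nil => simp [TensorProduct.tmul_zero]
  | cons a l ih => simp [TensorProduct.tmul_add, ih]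

theorem coassoc_w (l : List R) :
    (TensorProduct.assoc k (H k) (H k) (H k)).toLinearMap
      (TensorProduct.map (Delta2 k).toLinearMap LinearMap.id (Delta2 k (w k l)))
      = TensorProduct.map LinearMap.id (Delta2 k).toLinearMap (Delta2 k (w k l)) := by
  have lhs_eq : (TensorProduct.assoc k (H k) (H k) (H k)).toLinearMap
      (TensorProduct.map (Delta2 k).toLinearMap LinearMap.id (Delta2 k (w k l)))
      = ((cutsL l).map fun p => ((cutsL p.1).map fun q => G3 k (F q.1, F q.2, p.2)).sum).sum := by
    rw [Delta2_w, map_list_sum, List.map_map, map_list_sum, List.map_map]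
    refine congrArg List.sum (List.map_congr_left fun p _ => ?_)
    show (TensorProduct.assoc k (H k) (H k) (H k)).toLinearMap
        (TensorProduct.map (Delta2 k).toLinearMap LinearMap.id
          (TensorProduct.tmul k (w k p.1) (w k p.2))) = _
    rw [TensorProduct.map_tmul]
    show (TensorProduct.assoc k (H k) (H k) (H k)).toLinearMap
        (TensorProduct.tmul k (Delta2 k (w k p.1)) (w k p.2)) = _
    rw [Delta2_w, list_sum_tmul, map_list_sum, List.map_map]
    refine congrArg List.sum (List.map_congr_left fun q _ => ?_)
    show (TensorProduct.assoc k (H k) (H k) (H k))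
        (TensorProduct.tmul k (TensorProduct.tmul k (w k q.1) (w k q.2)) (w k p.2)) = _
    rw [TensorProduct.assoc_tmul]
    rfl
  have rhs_eq : TensorProduct.map LinearMap.id (Delta2 k).toLinearMap (Delta2 k (w k l))
      = ((cutsL l).map fun p => ((cutsL p.2).map fun r => G3 k (F p.1, F r.1, r.2)).sum).sum := by
    rw [Delta2_w, map_list_sum, List.map_map]
    refine congrArg List.sum (List.map_congr_left fun p _ => ?_)
    show TensorProduct.map LinearMap.id (Delta2 k).toLinearMap
        (TensorProduct.tmul k (w k p.1) (w k p.2)) = _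
    rw [TensorProduct.map_tmul]
    show TensorProduct.tmul k (w k p.1) (Delta2 k (w k p.2)) = _
    rw [Delta2_w, tmul_list_sum]
    rfl
  rw [lhs_eq, rhs_eq, key_sums]

theorem eps_w_nil : eps k (w k []) = 1 := by rw [w_nil, map_one]

theorem eps_w_append (a b : List R) :
    eps k (w k (a ++ b)) = eps k (w k a) * eps k (w k b) := by rw [w_append, map_mul]

theorem eps_emb_node (a b : R) (r : List R) : eps k (emb k (R.node a b r)) = 0 := by
  rw [show emb k (R.node a b r)
      = MonoidAlgebra.single (FreeMonoid.of (⟨R.node a b r, fun h => R.noConfusion h⟩ : Rp))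
        (1 : k) from rfl]
  rw [eps]; erw [MonoidAlgebra.lift_single, one_smul, FreeMonoid.lift_eval_of]

theorem eps_emb_leaf : eps k (emb k R.leaf) = 1 := by
  rw [show emb k R.leaf = 1 from rfl, map_one]

theorem eps_w_cons (u : R) (us : List R) :
    eps k (w k (u :: us)) = eps k (emb k u) * eps k (w k us) := by rw [w_cons, map_mul]

theorem smul_factor {α M : Type*} [AddCommMonoid M] [Module k M] (l : List α) (f : α → M)
    (a : k) : (l.map fun x => a • f x).sum = a • (l.map f).sum := by
  rw [List.smul_sum, List.map_map]; rfl

mutual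
theorem epsT : ∀ (t : R) (φ : R → H k),
    ((allCuts t).map fun c => eps k (w k c.1) • φ c.2).sum = φ t
  | R.leaf, φ => by
      rw [allCuts_leaf]
      simp only [List.map_cons, List.map_nil, List.sum_cons, List.sum_nil, add_zero]
      rw [eps_w_nil, one_smul]
  | R.node t1 t2 rest, φ => by
      rw [allCuts_node]
      simp only [List.map_cons, List.sum_cons]
      rw [show eps k (w k [R.node t1 t2 rest]) = 0 from eps_emb_node k t1 t2 rest,
        zero_smul, zero_add, sum_flatMap]
      have step : ∀ p1 : List R × R,
          (((allCuts t2).flatMap fun p2 =>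
            (cutsL rest).map fun q =>
              (p1.1 ++ p2.1 ++ q.1, R.node p1.2 p2.2 q.2)).map
                fun c => eps k (w k c.1) • φ c.2).sum
          = eps k (w k p1.1) • ((allCuts t2).map fun p2 => eps k (w k p2.1) •
              ((cutsL rest).map fun q => eps k (w k q.1) • φ (R.node p1.2 p2.2 q.2)).sum).sum := by
        intro p1
        rw [sum_flatMap]
        refine Eq.trans ?_ (smul_factor k _ _ _)
        refine congrArg List.sum (List.map_congr_left fun p2 _ => ?_)
        rw [List.map_map]
        refine Eq.trans (congrArg List.sum (List.map_congr_left fun q _ => ?_))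
          ((smul_factor k _ _ _).trans (congrArg _ (smul_factor k _ _ _)))
        show eps k (w k (p1.1 ++ p2.1 ++ q.1)) • φ (R.node p1.2 p2.2 q.2)
          = eps k (w k p1.1) • eps k (w k p2.1) • eps k (w k q.1) • φ (R.node p1.2 p2.2 q.2)
        rw [eps_w_append, eps_w_append, mul_smul, mul_smul]
      calc ((allCuts t1).map fun p1 =>
            (((allCuts t2).flatMap fun p2 =>
              (cutsL rest).map fun q =>
                (p1.1 ++ p2.1 ++ q.1, R.node p1.2 p2.2 q.2)).map
                  fun c => eps k (w k c.1) • φ c.2).sum).sum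
          = ((allCuts t1).map fun p1 => eps k (w k p1.1) •
              ((allCuts t2).map fun p2 => eps k (w k p2.1) •
                ((cutsL rest).map fun q =>
                  eps k (w k q.1) • φ (R.node p1.2 p2.2 q.2)).sum).sum).sum :=
            congrArg List.sum (List.map_congr_left fun p1 _ => step p1)
        _ = φ (R.node t1 t2 rest) := by
            rw [epsT t1 (fun u => ((allCuts t2).map fun p2 => eps k (w k p2.1) •
              ((cutsL rest).map fun q =>
                eps k (w k q.1) • φ (R.node u p2.2 q.2)).sum).sum)]
            rw [epsT t2 (fun v => ((cutsL rest).map fun q =>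
                eps k (w k q.1) • φ (R.node t1 v q.2)).sum)]
            rw [epsL rest (fun m => φ (R.node t1 t2 m))]

theorem epsL : ∀ (l : List R) (ψ : List R → H k),
    ((cutsL l).map fun p => eps k (w k p.1) • ψ p.2).sum = ψ l
  | [], ψ => by
      rw [cutsL_nil]
      simp only [List.map_cons, List.map_nil, List.sum_cons, List.sum_nil, add_zero]
      rw [eps_w_nil, one_smul]
  | u :: us, ψ => by
      rw [cutsL_cons, sum_flatMap]
      have step : ∀ p : List R × R,
          (((cutsL us).map fun q => (p.1 ++ q.1, p.2 :: q.2)).map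
              fun c => eps k (w k c.1) • ψ c.2).sum
          = eps k (w k p.1) •
              ((cutsL us).map fun q => eps k (w k q.1) • ψ (p.2 :: q.2)).sum := by
        intro p
        rw [List.map_map]
        refine Eq.trans (congrArg List.sum (List.map_congr_left fun q _ => ?_))
          (smul_factor k _ _ _)
        show eps k (w k (p.1 ++ q.1)) • ψ (p.2 :: q.2)
          = eps k (w k p.1) • eps k (w k q.1) • ψ (p.2 :: q.2)
        rw [eps_w_append, mul_smul]
      calc _ = ((allCuts u).map fun p => eps k (w k p.1) •
              ((cutsL us).map fun q => eps k (w k q.1) • ψ (p.2 :: q.2)).sum).sum :=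
            congrArg List.sum (List.map_congr_left fun p _ => step p)
        _ = ψ (u :: us) := by
            rw [epsT u (fun v => ((cutsL us).map fun q =>
              eps k (w k q.1) • ψ (v :: q.2)).sum)]
            rw [epsL us (fun m => ψ (u :: m))]
end

theorem chiT (t : R) (χ : List Rp → H k) :
    ((allCuts t).map fun c => eps k (emb k c.2) • χ (F c.1)).sum = χ (F [t]) := by
  cases t with
  | leaf =>
      rw [allCuts_leaf]
      simp only [List.map_cons, List.map_nil, List.sum_cons, List.sum_nil, add_zero]
      rw [eps_emb_leaf, one_smul]
      rfl
  | node a b r =>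
      rw [allCuts_node]
      simp only [List.map_cons, List.sum_cons]
      rw [show eps k (emb k R.leaf) = 1 from eps_emb_leaf k, one_smul]
      rw [show (((allCuts a).flatMap fun p1 => (allCuts b).flatMap fun p2 =>
            (cutsL r).map fun q => (p1.1 ++ p2.1 ++ q.1, R.node p1.2 p2.2 q.2)).map
              fun c => eps k (emb k c.2) • χ (F c.1)).sum = 0 from ?_, add_zero]
      refine List.sum_eq_zero fun x hx => ?_
      simp only [List.mem_map, List.mem_flatMap] at hx
      obtain ⟨c, ⟨p1, _, p2, _, q, _, rfl⟩, rfl⟩ := hx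
      rw [eps_emb_node, zero_smul]

theorem chiL : ∀ (l : List R) (χ : List Rp → H k),
    ((cutsL l).map fun p => eps k (w k p.2) • χ (F p.1)).sum = χ (F l)
  | [], χ => by
      rw [cutsL_nil]
      simp only [List.map_cons, List.map_nil, List.sum_cons, List.sum_nil, add_zero]
      rw [eps_w_nil, one_smul]
  | u :: us, χ => by
      let g : List Rp → H k :=
        fun a => ((cutsL us).map fun q => eps k (w k q.2) • χ (a ++ F q.1)).sum
      have step : ∀ p : List R × R,
          (((cutsL us).map fun q => (p.1 ++ q.1, p.2 :: q.2)).map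
              fun c => eps k (w k c.2) • χ (F c.1)).sum
          = eps k (emb k p.2) • g (F p.1) := by
        intro p
        show _ = eps k (emb k p.2) •
          ((cutsL us).map fun q => eps k (w k q.2) • χ (F p.1 ++ F q.1)).sum
        rw [List.map_map]
        refine Eq.trans (congrArg List.sum (List.map_congr_left fun q _ => ?_))
          (smul_factor k _ _ _)
        show eps k (w k (p.2 :: q.2)) • χ (F (p.1 ++ q.1))
          = eps k (emb k p.2) • eps k (w k q.2) • χ (F p.1 ++ F q.1)
        rw [eps_w_cons, F_append, mul_smul]
      rw [cutsL_cons, sum_flatMap]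
      refine Eq.trans (congrArg List.sum (List.map_congr_left fun p _ => step p)) ?_
      refine Eq.trans (chiT k u g) ?_
      refine Eq.trans (chiL us fun b => χ (F [u] ++ b)) ?_
      conv_rhs => rw [F_cons]


theorem reduce_w {M : Type*} [AddCommMonoid M] [Module k M] (f g : H k →ₗ[k] M)
    (h : ∀ l : List R, f (w k l) = g (w k l)) : f = g := by
  refine MonoidAlgebra.lhom_ext' fun x => LinearMap.ext fun c => ?_
  show f (MonoidAlgebra.single x c) = g (MonoidAlgebra.single x c)
  rw [show (MonoidAlgebra.single x c : H k) = c • MonoidAlgebra.single x (1 : k) by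
    rw [MonoidAlgebra.smul_single', mul_one], map_smul, map_smul]
  congr 1
  have hx : MonoidAlgebra.single x (1 : k) = w k ((FreeMonoid.toList x).map Subtype.val) := by
    rw [← w_ofRp, FreeMonoid.ofList_toList]
  rw [hx]
  exact h _


/-- `Δ₂` is coassociative and `ε` is a counit for it; hence
`(H^red_pl, concatenation, 1, Δ₂, ε)` is a bialgebra (`Δ₂` and `ε` being algebra
morphisms by construction). -/
theorem Delta2_coassoc_counit :
    ((TensorProduct.assoc k (H k) (H k) (H k)).toLinearMap ∘ₗ
        TensorProduct.map (Delta2 k).toLinearMap LinearMap.id ∘ₗ (Delta2 k).toLinearMap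
      = TensorProduct.map LinearMap.id (Delta2 k).toLinearMap ∘ₗ (Delta2 k).toLinearMap) ∧
    ((TensorProduct.lid k (H k)).toLinearMap ∘ₗ
        TensorProduct.map (eps k).toLinearMap LinearMap.id ∘ₗ (Delta2 k).toLinearMap
      = LinearMap.id) ∧
    ((TensorProduct.rid k (H k)).toLinearMap ∘ₗ
        TensorProduct.map LinearMap.id (eps k).toLinearMap ∘ₗ (Delta2 k).toLinearMap
      = LinearMap.id) := by
  refine ⟨?_, ?_, ?_⟩
  · refine reduce_w k _ _ fun l => ?_
    simp only [LinearMap.comp_apply, AlgHom.toLinearMap_apply]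
    exact coassoc_w k l
  · refine reduce_w k _ _ fun l => ?_
    simp only [LinearMap.comp_apply, AlgHom.toLinearMap_apply, LinearMap.id_apply]
    rw [Delta2_w, map_list_sum, List.map_map, map_list_sum, List.map_map]
    refine Eq.trans (congrArg List.sum (List.map_congr_left fun p _ => ?_))
      (epsL k l (w k))
    show (TensorProduct.lid k (H k)).toLinearMap
        (TensorProduct.map (eps k).toLinearMap LinearMap.id
          (TensorProduct.tmul k (w k p.1) (w k p.2))) = eps k (w k p.1) • w k p.2
    rw [TensorProduct.map_tmul]
    show (TensorProduct.lid k (H k))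
        (TensorProduct.tmul k (eps k (w k p.1)) (w k p.2)) = _
    rw [TensorProduct.lid_tmul]
  · refine reduce_w k _ _ fun l => ?_
    simp only [LinearMap.comp_apply, AlgHom.toLinearMap_apply, LinearMap.id_apply]
    rw [Delta2_w, map_list_sum, List.map_map, map_list_sum, List.map_map]
    refine Eq.trans (congrArg List.sum (List.map_congr_left fun p _ => ?_))
      (chiL k l fun a => MonoidAlgebra.single (FreeMonoid.ofList a) (1 : k))
    show (TensorProduct.rid k (H k)).toLinearMap
        (TensorProduct.map LinearMap.id (eps k).toLinearMap
          (TensorProduct.tmul k (w k p.1) (w k p.2))) = eps k (w k p.2) • w k p.1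
    rw [TensorProduct.map_tmul]
    show (TensorProduct.rid k (H k))
        (TensorProduct.tmul k (w k p.1) (eps k (w k p.2))) = _
    rw [TensorProduct.rid_tmul]
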